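/- Let A, B, C be affinely independent points in ℝ². Let S = |det(C − B, A − B)|/2 be the area of triangle ABC, let a = dist(B, C), b = dist(C, A), and define h_a = 2S/a, h_b = 2S/b. If a > b and the angle ∠ACB is not a right angle, then a·h_a/(a + h_a) < b·h_b/(b + h_b). -/

import Mathlib

open EuclideanGeometry

/-- The determinant of two vectors in the Euclidean plane. -/
def det2 (v w : EuclideanSpace ℝ (Fin 2)) : ℝ := v 0 * w 1 - v 1 * w 0

lemma inner_eq (v w : EuclideanSpace ℝ (Fin 2)) :
    (inner ℝ v w : ℝ) = v 0 * w 0 + v 1 * w 1 := by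
  simp [PiLp.inner_apply, Fin.sum_univ_two, mul_comm]

lemma dist_sq (x y : EuclideanSpace ℝ (Fin 2)) :
    dist x y ^ 2 = (x 0 - y 0) ^ 2 + (x 1 - y 1) ^ 2 := by
  rw [EuclideanSpace.dist_eq, Real.sq_sqrt (by positivity)]
  simp [Fin.sum_univ_two, Real.dist_eq, sq_abs]

lemma det_ne_zero {A B C : EuclideanSpace ℝ (Fin 2)}
    (hABC : AffineIndependent ℝ ![A, B, C]) : det2 (C - B) (A - B) ≠ 0 := by
  intro h
  rw [affineIndependent_iff_not_collinear_set] at hABC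
  apply hABC
  have hd : (C 0 - B 0) * (A 1 - B 1) - (C 1 - B 1) * (A 0 - B 0) = 0 := by
    simpa [det2, PiLp.sub_apply] using h
  rcases eq_or_ne C B with hCB | hCB
  · rw [hCB]
    have : ({A, B, B} : Set (EuclideanSpace ℝ (Fin 2))) = {A, B} := by simp
    rw [this]
    exact collinear_pair ℝ A B
  · rw [collinear_iff_exists_forall_eq_smul_vadd]
    refine ⟨B, C - B, ?_⟩
    have hv : C - B ≠ 0 := sub_ne_zero.mpr hCB
    have hv01 : C 0 - B 0 ≠ 0 ∨ C 1 - B 1 ≠ 0 := by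
      by_contra hc
      push_neg at hc
      apply hv
      ext i
      fin_cases i <;> simp only [PiLp.sub_apply, PiLp.zero_apply] <;>
        [exact hc.1; exact hc.2]
    have key : ∃ c : ℝ, A - B = c • (C - B) := by
      rcases hv01 with h0 | h1
      · refine ⟨(A 0 - B 0) / (C 0 - B 0), ?_⟩
        ext i
        fin_cases i <;>
          simp only [PiLp.smul_apply, PiLp.sub_apply, smul_eq_mul, Fin.zero_eta, Fin.mk_one, Fin.isValue] <;>
          field_simp <;> nlinarith [hd]
      · refine ⟨(A 1 - B 1) / (C 1 - B 1), ?_⟩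
        ext i
        fin_cases i <;>
          simp only [PiLp.smul_apply, PiLp.sub_apply, smul_eq_mul, Fin.zero_eta, Fin.mk_one, Fin.isValue] <;>
          field_simp <;> nlinarith [hd]
    obtain ⟨c, hc⟩ := key
    intro p hp
    simp only [Set.mem_insert_iff, Set.mem_singleton_iff] at hp
    rcases hp with rfl | rfl | rfl
    · exact ⟨c, by rw [← hc]; simp⟩
    · exact ⟨0, by simp⟩
    · exact ⟨1, by simp⟩

lemma det_inner_sq (u v : EuclideanSpace ℝ (Fin 2)) :
    det2 u v ^ 2 + (inner ℝ u v : ℝ) ^ 2 = ‖u‖ ^ 2 * ‖v‖ ^ 2 := by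
  have h1 : ‖u‖ ^ 2 = (inner ℝ u u : ℝ) := (real_inner_self_eq_norm_sq u).symm
  have h2 : ‖v‖ ^ 2 = (inner ℝ v v : ℝ) := (real_inner_self_eq_norm_sq v).symm
  rw [h1, h2, inner_eq, inner_eq, inner_eq, det2]
  ring

/-- Geometric form of Puzzle 5: in a triangle `ABC` with `a = BC > b = CA`
and no right angle at `C`, the inscribed square on the side of length `a`
is smaller than the inscribed square on the side of length `b`. -/
theorem stmt8 (A B C : EuclideanSpace ℝ (Fin 2))
    (hABC : AffineIndependent ℝ ![A, B, C])
    (S a b ha hb : ℝ)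
    (hS : S = |det2 (C - B) (A - B)| / 2)
    (haDef : a = dist B C) (hbDef : b = dist C A)
    (hhaDef : ha = 2 * S / a) (hhbDef : hb = 2 * S / b)
    (hab : a > b) (hangle : ∠ A C B ≠ Real.pi / 2) :
    a * ha / (a + ha) < b * hb / (b + hb) := by
  -- positivity of S
  have hdet := det_ne_zero hABC
  have hSpos : 0 < S := by
    rw [hS]
    have := abs_pos.mpr hdet
    linarith
  -- C ≠ A, so b > 0
  have hCA : C ≠ A := by
    intro h
    have h02 : ![A, B, C] 0 = ![A, B, C] 2 := by simp [h.symm]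
    exact (by decide : (0 : Fin 3) ≠ 2) (hABC.injective h02)
  have hb0 : 0 < b := by rw [hbDef]; exact dist_pos.mpr hCA
  have ha0 : 0 < a := lt_trans hb0 hab
  -- the inner product at C is nonzero
  have hinner : (inner ℝ (A - C) (B - C) : ℝ) ≠ 0 := by
    intro h
    apply hangle
    have : (A -ᵥ C : EuclideanSpace ℝ (Fin 2)) = A - C := rfl
    rw [EuclideanGeometry.angle, ← InnerProductGeometry.inner_eq_zero_iff_angle_eq_pi_div_two]
    simpa [vsub_eq_sub] using h
  -- key identity : det² + inner² = a²b²
  have hkey : det2 (C - B) (A - B) ^ 2 + (inner ℝ (A - C) (B - C) : ℝ) ^ 2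
      = a ^ 2 * b ^ 2 := by
    have e1 : a ^ 2 = (B 0 - C 0) ^ 2 + (B 1 - C 1) ^ 2 := by rw [haDef, dist_sq]
    have e2 : b ^ 2 = (C 0 - A 0) ^ 2 + (C 1 - A 1) ^ 2 := by rw [hbDef, dist_sq]
    rw [e1, e2, det2, inner_eq]
    simp only [PiLp.sub_apply]
    ring
  -- hence 2S < a*b
  have h2S : 2 * S < a * b := by
    have habs : (2 * S) ^ 2 = det2 (C - B) (A - B) ^ 2 := by
      rw [hS]
      rw [show 2 * (|det2 (C - B) (A - B)| / 2) = |det2 (C - B) (A - B)| by ring]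
      exact sq_abs _
    nlinarith [sq_pos_of_ne_zero hinner, mul_pos ha0 hb0, hSpos]
  -- final algebra
  rw [hhaDef, hhbDef]
  have hane : a ≠ 0 := ne_of_gt ha0
  have hbne : b ≠ 0 := ne_of_gt hb0
  have hda : a + 2 * S / a = (a ^ 2 + 2 * S) / a := by field_simp
  have hdb : b + 2 * S / b = (b ^ 2 + 2 * S) / b := by field_simp
  have hda0 : 0 < a + 2 * S / a := by positivity
  have hdb0 : 0 < b + 2 * S / b := by positivity
  rw [div_lt_div_iff₀ hda0 hdb0]
  have e1 : a * (2 * S / a) = 2 * S := by field_simp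
  have e2 : b * (2 * S / b) = 2 * S := by field_simp
  rw [e1, e2, hda, hdb, mul_div_assoc', mul_div_assoc', div_lt_div_iff₀ hb0 ha0]
  nlinarith [mul_pos hSpos (mul_pos (sub_pos.mpr hab) (sub_pos.mpr h2S))]
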